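/- Let S be a numerical semigroup with multiplicity 3 and Kunz-coordinates vector (x_1, x_2). Then S is an intersection of symmetric numerical semigroups with multiplicity 3 if and only if either S is 3-symmetric, or S is not 3-irreducible with x_1 odd and x_2 even. -/
import Mathlib


/-- A numerical semigroup: a subset of ℕ containing 0, closed under addition,
with finite complement. -/
def IsNumSgp (S : Set ℕ) : Prop :=
  0 ∈ S ∧ (∀ a ∈ S, ∀ b ∈ S, a + b ∈ S) ∧ (Sᶜ).Finite

/-- Multiplicity: least positive element. -/
noncomputable def nsMult (S : Set ℕ) : ℕ := sInf {n | n ∈ S ∧ 0 < n}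

/-- Frobenius number: largest integer not in S. -/
noncomputable def nsFrob (S : Set ℕ) : ℕ := sSup Sᶜ

/-- Genus: number of gaps. -/
noncomputable def nsGenus (S : Set ℕ) : ℕ := Sᶜ.ncard

/-- Special gaps of S. -/
def nsSG (S : Set ℕ) : Set ℕ := {h | h ∉ S ∧ IsNumSgp (S ∪ {h})}

/-- Special gaps of S larger than m. -/
def nsSGm (m : ℕ) (S : Set ℕ) : Set ℕ := {h ∈ nsSG S | m < h}

/-- S is irreducible: not an intersection of two numerical semigroups properly containing it. -/
def nsIrr (S : Set ℕ) : Prop :=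
  ¬ ∃ T₁ T₂ : Set ℕ, IsNumSgp T₁ ∧ IsNumSgp T₂ ∧ S ⊂ T₁ ∧ S ⊂ T₂ ∧ S = T₁ ∩ T₂

/-- S is m-irreducible: not an intersection of two numerical semigroups of
multiplicity m properly containing it. -/
def nsMIrr (m : ℕ) (S : Set ℕ) : Prop :=
  ¬ ∃ T₁ T₂ : Set ℕ, IsNumSgp T₁ ∧ IsNumSgp T₂ ∧ nsMult T₁ = m ∧ nsMult T₂ = m ∧
      S ⊂ T₁ ∧ S ⊂ T₂ ∧ S = T₁ ∩ T₂

/-- Symmetric: irreducible with odd Frobenius number. -/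
def nsSym (S : Set ℕ) : Prop := nsIrr S ∧ Odd (nsFrob S)

/-- Pseudosymmetric: irreducible with even Frobenius number. -/
def nsPseudoSym (S : Set ℕ) : Prop := nsIrr S ∧ Even (nsFrob S)

/-- m-symmetric: m-irreducible with odd Frobenius number. -/
def nsMSym (m : ℕ) (S : Set ℕ) : Prop := nsMIrr m S ∧ Odd (nsFrob S)

/-- m-pseudosymmetric: m-irreducible with even Frobenius number. -/
def nsMPseudoSym (m : ℕ) (S : Set ℕ) : Prop := nsMIrr m S ∧ Even (nsFrob S)

/-- The numerical semigroup (submonoid) generated by a set of naturals. -/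
def nsGen (A : Set ℕ) : Set ℕ := (AddSubmonoid.closure A : Set ℕ)

/-- Apéry element: least element of S congruent to i mod m. -/
noncomputable def nsApery (S : Set ℕ) (m i : ℕ) : ℕ := sInf {s | s ∈ S ∧ s % m = i % m}

/-! ### Auxiliary development -/

/-- The mult-3 numerical semigroup with Kunz coordinates `(y1, y2)`. -/
def Tset (y1 y2 : ℕ) : Set ℕ :=
  {n | n % 3 = 0 ∨ (n % 3 = 1 ∧ 3 * y1 + 1 ≤ n) ∨ (n % 3 = 2 ∧ 3 * y2 + 2 ≤ n)}

/-- Kunz validity conditions. -/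
def KValid (y1 y2 : ℕ) : Prop := 1 ≤ y1 ∧ 1 ≤ y2 ∧ y1 ≤ 2 * y2 + 1 ∧ y2 ≤ 2 * y1

lemma mem_Tset {y1 y2 n : ℕ} :
    n ∈ Tset y1 y2 ↔
      (n % 3 = 0 ∨ (n % 3 = 1 ∧ 3 * y1 + 1 ≤ n) ∨ (n % 3 = 2 ∧ 3 * y2 + 2 ≤ n)) :=
  Iff.rfl

lemma numsgp_Tset {y1 y2 : ℕ} (hv : KValid y1 y2) : IsNumSgp (Tset y1 y2) := by
  obtain ⟨h1, h2, h3, h4⟩ := hv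
  refine ⟨by simp [mem_Tset], ?_, ?_⟩
  · intro a ha b hb
    rw [mem_Tset] at ha hb ⊢
    omega
  · apply (Set.finite_Iio (3 * y1 + 3 * y2 + 3)).subset
    intro n hn
    simp only [Set.mem_compl_iff, mem_Tset] at hn
    simp only [Set.mem_Iio]
    omega

lemma compl_Tset_fin {y1 y2 : ℕ} (hv : KValid y1 y2) : ((Tset y1 y2)ᶜ).Finite :=
  (numsgp_Tset hv).2.2

lemma compl_Tset_ne {y1 y2 : ℕ} (hv : KValid y1 y2) : ((Tset y1 y2)ᶜ).Nonempty := by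
  obtain ⟨h1, h2, h3, h4⟩ := hv
  refine ⟨1, ?_⟩
  simp only [Set.mem_compl_iff, mem_Tset]
  omega

lemma mult_Tset {y1 y2 : ℕ} (hv : KValid y1 y2) : nsMult (Tset y1 y2) = 3 := by
  unfold nsMult
  apply le_antisymm
  · exact Nat.sInf_le ⟨by rw [mem_Tset]; omega, by norm_num⟩
  · apply le_csInf ⟨3, by rw [Set.mem_setOf_eq, mem_Tset]; omega⟩
    rintro b ⟨hb, hb0⟩
    rw [mem_Tset] at hb
    obtain ⟨h1, h2, h3, h4⟩ := hv
    omega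

lemma apery1_Tset (y1 y2 : ℕ) :
    nsApery (Tset y1 y2) 3 1 = 3 * y1 + 1 := by
  unfold nsApery
  apply le_antisymm
  · exact Nat.sInf_le ⟨by rw [mem_Tset]; omega, by omega⟩
  · apply le_csInf ⟨3 * y1 + 1, by rw [Set.mem_setOf_eq, mem_Tset]; constructor <;> omega⟩
    rintro b ⟨hb, hb3⟩
    rw [mem_Tset] at hb
    omega

lemma apery2_Tset (y1 y2 : ℕ) :
    nsApery (Tset y1 y2) 3 2 = 3 * y2 + 2 := by
  unfold nsApery
  apply le_antisymm
  · exact Nat.sInf_le ⟨by rw [mem_Tset]; omega, by omega⟩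
  · apply le_csInf ⟨3 * y2 + 2, by rw [Set.mem_setOf_eq, mem_Tset]; constructor <;> omega⟩
    rintro b ⟨hb, hb3⟩
    rw [mem_Tset] at hb
    omega

lemma frob_Tset {y1 y2 : ℕ} (hv : KValid y1 y2) :
    nsFrob (Tset y1 y2) = max (3 * y1 + 1) (3 * y2 + 2) - 3 := by
  obtain ⟨h1, h2, h3, h4⟩ := hv
  unfold nsFrob
  apply le_antisymm
  · apply csSup_le (compl_Tset_ne ⟨h1, h2, h3, h4⟩)
    intro n hn
    simp only [Set.mem_compl_iff, mem_Tset] at hn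
    omega
  · apply le_csSup (compl_Tset_fin ⟨h1, h2, h3, h4⟩).bddAbove
    simp only [Set.mem_compl_iff, mem_Tset]
    omega

lemma gap_le_frob {T : Set ℕ} (hfin : (Tᶜ).Finite) {n : ℕ} (hn : n ∉ T) :
    n ≤ nsFrob T :=
  le_csSup hfin.bddAbove hn

lemma frob_notMem {T : Set ℕ} (hfin : (Tᶜ).Finite) (hne : (Tᶜ).Nonempty) :
    nsFrob T ∉ T :=
  Nat.sSup_mem hne hfin.bddAbove

lemma mem_of_frob_lt {T : Set ℕ} (hfin : (Tᶜ).Finite) {n : ℕ} (hn : nsFrob T < n) :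
    n ∈ T := by
  by_contra h
  exact absurd (gap_le_frob hfin h) (by omega)

/-- A mult-3 numerical semigroup equals `Tset y1 y2` for valid Kunz coordinates. -/
lemma struct_mult3 {T : Set ℕ} (hT : IsNumSgp T) (hm : nsMult T = 3) :
    ∃ y1 y2 : ℕ, KValid y1 y2 ∧ T = Tset y1 y2 := by
  obtain ⟨h0, hadd, hfin⟩ := hT
  have hbig : ∀ n : ℕ, sSup Tᶜ < n → n ∈ T := by
    intro n hn
    by_contra h
    exact absurd (le_csSup hfin.bddAbove h) (by omega)
  set B := sSup Tᶜ with hB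
  have h3 : 3 ∈ T := by
    have hne : {n : ℕ | n ∈ T ∧ 0 < n}.Nonempty :=
      ⟨B + 1, hbig _ (by omega), by omega⟩
    have h := Nat.sInf_mem hne
    unfold nsMult at hm
    rw [hm] at h
    exact h.1
  have hmin : ∀ n ∈ T, 0 < n → 3 ≤ n := by
    intro n hn h0n
    have : nsMult T ≤ n := Nat.sInf_le ⟨hn, h0n⟩
    omega
  have hmul : ∀ k : ℕ, 3 * k ∈ T := by
    intro k
    induction k with
    | zero => simpa using h0
    | succ n ih =>
      have := hadd _ ih _ h3
      have he : 3 * (n + 1) = 3 * n + 3 := by ring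
      rwa [he]
  have h1T : (1 : ℕ) ∉ T := fun h => by have := hmin 1 h (by omega); omega
  have h2T : (2 : ℕ) ∉ T := fun h => by have := hmin 2 h (by omega); omega
  -- residue 1
  have hne1 : {s : ℕ | s ∈ T ∧ s % 3 = 1 % 3}.Nonempty :=
    ⟨3 * B + 4, hbig _ (by omega), by omega⟩
  have ha1 := Nat.sInf_mem hne1
  set a1 := sInf {s : ℕ | s ∈ T ∧ s % 3 = 1 % 3} with ha1def
  obtain ⟨ha1T, ha1m⟩ := ha1
  have hup1 : ∀ n : ℕ, n % 3 = 1 → a1 ≤ n → n ∈ T := by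
    intro n hn hle
    have h3k := hmul ((n - a1) / 3)
    have := hadd _ ha1T _ h3k
    have he : a1 + 3 * ((n - a1) / 3) = n := by omega
    rwa [he] at this
  have hdn1 : ∀ n : ℕ, n % 3 = 1 → n < a1 → n ∉ T := by
    intro n hn hlt hmem
    have : a1 ≤ n := Nat.sInf_le ⟨hmem, by omega⟩
    omega
  -- residue 2
  have hne2 : {s : ℕ | s ∈ T ∧ s % 3 = 2 % 3}.Nonempty :=
    ⟨3 * B + 5, hbig _ (by omega), by omega⟩
  have ha2 := Nat.sInf_mem hne2
  set a2 := sInf {s : ℕ | s ∈ T ∧ s % 3 = 2 % 3} with ha2def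
  obtain ⟨ha2T, ha2m⟩ := ha2
  have hup2 : ∀ n : ℕ, n % 3 = 2 → a2 ≤ n → n ∈ T := by
    intro n hn hle
    have h3k := hmul ((n - a2) / 3)
    have := hadd _ ha2T _ h3k
    have he : a2 + 3 * ((n - a2) / 3) = n := by omega
    rwa [he] at this
  have hdn2 : ∀ n : ℕ, n % 3 = 2 → n < a2 → n ∉ T := by
    intro n hn hlt hmem
    have : a2 ≤ n := Nat.sInf_le ⟨hmem, by omega⟩
    omega
  have ha1ne : a1 ≠ 1 := fun h => h1T (h ▸ ha1T)
  have ha2ne : a2 ≠ 2 := fun h => h2T (h ▸ ha2T)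
  -- Kunz inequalities
  have hk1 : a2 ≤ a1 + a1 := Nat.sInf_le ⟨hadd _ ha1T _ ha1T, by omega⟩
  have hk2 : a1 ≤ a2 + a2 := Nat.sInf_le ⟨hadd _ ha2T _ ha2T, by omega⟩
  refine ⟨a1 / 3, a2 / 3, ⟨by omega, by omega, by omega, by omega⟩, ?_⟩
  ext n
  rw [mem_Tset]
  constructor
  · intro hn
    have hmod : n % 3 = 0 ∨ n % 3 = 1 ∨ n % 3 = 2 := by omega
    rcases hmod with h | h | h
    · exact Or.inl h
    · refine Or.inr (Or.inl ⟨h, ?_⟩)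
      have : a1 ≤ n := Nat.sInf_le ⟨hn, by omega⟩
      omega
    · refine Or.inr (Or.inr ⟨h, ?_⟩)
      have : a2 ≤ n := Nat.sInf_le ⟨hn, by omega⟩
      omega
  · rintro (h | ⟨h, hle⟩ | ⟨h, hle⟩)
    · have := hmul (n / 3)
      have he : 3 * (n / 3) = n := by omega
      rwa [he] at this
    · exact hup1 n h (by omega)
    · exact hup2 n h (by omega)

/-- Symmetry property implies irreducibility. -/
lemma irr_of_SP {T : Set ℕ} (hT : IsNumSgp T) (hne : (Tᶜ).Nonempty)
    (hSP : ∀ n, n ∉ T → nsFrob T - n ∈ T) : nsIrr T := by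
  rintro ⟨T1, T2, hT1, hT2, hs1, hs2, heq⟩
  have hfin := hT.2.2
  have hF : nsFrob T ∉ T := frob_notMem hfin hne
  have key : ∀ U : Set ℕ, IsNumSgp U → T ⊂ U → nsFrob T ∈ U := by
    intro U hU hsub
    obtain ⟨t, htU, htT⟩ := Set.exists_of_ssubset hsub
    have htle : t ≤ nsFrob T := gap_le_frob hfin htT
    have h2 : nsFrob T - t ∈ U := hsub.subset (hSP t htT)
    have h3 := hU.2.1 _ htU _ h2
    have he : t + (nsFrob T - t) = nsFrob T := by omega
    rwa [he] at h3
  have hmem : nsFrob T ∈ T1 ∩ T2 := ⟨key _ hT1 hs1, key _ hT2 hs2⟩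
  rw [← heq] at hmem
  exact hF hmem

/-- Irreducibility with odd Frobenius implies the symmetry property. -/
lemma SP_of_irr {T : Set ℕ} (hT : IsNumSgp T) (hne : (Tᶜ).Nonempty)
    (hirr : nsIrr T) (hodd : Odd (nsFrob T)) :
    ∀ n, n ∉ T → nsFrob T - n ∈ T := by
  obtain ⟨hz, hadd, hfin⟩ := hT
  by_contra hcon
  push_neg at hcon
  obtain ⟨n0, hn0T, hn0F⟩ := hcon
  set F := nsFrob T with hFdef
  have hgap : ∀ m, m ∉ T → m ≤ F := fun m hm => gap_le_frob hfin hm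
  have hFT : F ∉ T := frob_notMem hfin hne
  have hF0 : 0 < F := by
    rcases Nat.eq_zero_or_pos F with h | h
    · exact absurd (h ▸ hFT) (fun hh => hh hz)
    · exact h
  set A := {x : ℕ | x ∉ T ∧ F - x ∉ T} with hAdef
  have hAsub : A ⊆ Tᶜ := fun x hx => hx.1
  have hAbdd : BddAbove A := (hfin.subset hAsub).bddAbove
  have hn0A : n0 ∈ A := ⟨hn0T, hn0F⟩
  have hn0A' : F - n0 ∈ A := by
    refine ⟨hn0F, ?_⟩
    have : n0 ≤ F := hgap _ hn0T
    rw [Nat.sub_sub_self this]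
    exact hn0T
  have hAne : A.Nonempty := ⟨n0, hn0A⟩
  set h := sSup A with hhdef
  have hhA : h ∈ A := Nat.sSup_mem hAne hAbdd
  have hle1 : n0 ≤ h := le_csSup hAbdd hn0A
  have hle2 : F - n0 ≤ h := le_csSup hAbdd hn0A'
  have hn0le : n0 ≤ F := hgap _ hn0T
  have h2h : F ≤ 2 * h := by omega
  have hoddF : F % 2 = 1 := Nat.odd_iff.mp hodd
  have h2h' : F < 2 * h := by
    rcases Nat.lt_or_ge F (2 * h) with h' | h'
    · exact h'
    · have : F = 2 * h := by omega
      omega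
  have hhT : h ∉ T := hhA.1
  have hFh : F - h ∉ T := hhA.2
  have hhle : h ≤ F := hgap _ hhT
  have hhne : h ≠ F := by
    intro he
    rw [he, Nat.sub_self] at hFh
    exact hFh hz
  have h2hT : 2 * h ∈ T := mem_of_frob_lt hfin h2h'
  -- T ∪ {h} is a numerical semigroup
  have hT' : IsNumSgp (insert h T) := by
    refine ⟨Set.mem_insert_of_mem _ hz, ?_, ?_⟩
    · have hkey : ∀ b ∈ T, 0 < b → h + b ∈ T := by
        intro b hbT hb0
        by_contra hc
        have hbF : h + b ≤ F := hgap _ hc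
        have hc2 : F - (h + b) ∉ T := by
          intro hc2
          have := hadd _ hc2 _ hbT
          have he : F - (h + b) + b = F - h := by omega
          rw [he] at this
          exact hFh this
        have : h + b ≤ h := le_csSup hAbdd ⟨hc, hc2⟩
        omega
      rintro a (rfl | haT) b (rfl | hbT)
      · exact Set.mem_insert_of_mem _ (by rwa [two_mul] at h2hT)
      · rcases Nat.eq_zero_or_pos b with rfl | hb0
        · exact Set.mem_insert _ _
        · exact Set.mem_insert_of_mem _ (hkey b hbT hb0)
      · rcases Nat.eq_zero_or_pos a with rfl | ha0
        · simp
        · have := hkey a haT ha0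
          rw [Nat.add_comm] at this
          exact Set.mem_insert_of_mem _ this
      · exact Set.mem_insert_of_mem _ (hadd _ haT _ hbT)
    · exact hfin.subset (fun x hx => by
        simp only [Set.mem_compl_iff, Set.mem_insert_iff, not_or] at hx
        exact hx.2)
  -- T ∪ {F} is a numerical semigroup
  have hT'' : IsNumSgp (insert F T) := by
    refine ⟨Set.mem_insert_of_mem _ hz, ?_, ?_⟩
    · have hkey : ∀ b ∈ T, 0 < b → F + b ∈ T := by
        intro b hbT hb0
        exact mem_of_frob_lt hfin (by omega)
      rintro a (rfl | haT) b (rfl | hbT)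
      · exact Set.mem_insert_of_mem _ (mem_of_frob_lt hfin (by omega))
      · rcases Nat.eq_zero_or_pos b with rfl | hb0
        · exact Set.mem_insert _ _
        · exact Set.mem_insert_of_mem _ (hkey b hbT hb0)
      · rcases Nat.eq_zero_or_pos a with rfl | ha0
        · simp
        · have := hkey a haT ha0
          rw [Nat.add_comm] at this
          exact Set.mem_insert_of_mem _ this
      · exact Set.mem_insert_of_mem _ (hadd _ haT _ hbT)
    · exact hfin.subset (fun x hx => by
        simp only [Set.mem_compl_iff, Set.mem_insert_iff, not_or] at hx
        exact hx.2)
  apply hirr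
  refine ⟨insert h T, insert F T, hT', hT'', ?_, ?_, ?_⟩
  · exact ⟨Set.subset_insert _ _, fun hsub => hhT (hsub (Set.mem_insert _ _))⟩
  · exact ⟨Set.subset_insert _ _, fun hsub => hFT (hsub (Set.mem_insert _ _))⟩
  · ext n
    simp only [Set.mem_inter_iff, Set.mem_insert_iff]
    constructor
    · intro hn
      exact ⟨Or.inr hn, Or.inr hn⟩
    · rintro ⟨rfl | hn, h2⟩
      · rcases h2 with h2 | h2
        · exact absurd h2 hhne
        · exact h2
      · exact hn

/-- The "symmetric family" condition on Kunz coordinates. -/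
def SymFam (y1 y2 : ℕ) : Prop := (y2 = 2 * y1 ∧ 1 ≤ y1) ∨ (y1 = 2 * y2 + 1 ∧ 1 ≤ y2)

lemma kvalid_of_symfam {y1 y2 : ℕ} (h : SymFam y1 y2) : KValid y1 y2 := by
  rcases h with ⟨h1, h2⟩ | ⟨h1, h2⟩ <;> exact ⟨by omega, by omega, by omega, by omega⟩

lemma sym_of_symfam {y1 y2 : ℕ} (h : SymFam y1 y2) : nsSym (Tset y1 y2) := by
  have hv := kvalid_of_symfam h
  have hfrob := frob_Tset hv
  obtain ⟨v1, v2, v3, v4⟩ := hv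
  constructor
  · apply irr_of_SP (numsgp_Tset ⟨v1, v2, v3, v4⟩) (compl_Tset_ne ⟨v1, v2, v3, v4⟩)
    intro n hn
    rw [hfrob]
    rw [mem_Tset] at hn ⊢
    rcases h with ⟨h1, h2⟩ | ⟨h1, h2⟩ <;> omega
  · rw [hfrob, Nat.odd_iff]
    rcases h with ⟨h1, h2⟩ | ⟨h1, h2⟩ <;> omega

lemma symfam_of_sym {y1 y2 : ℕ} (hv : KValid y1 y2) (hsym : nsSym (Tset y1 y2)) :
    SymFam y1 y2 := by
  obtain ⟨hirr, hodd⟩ := hsym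
  have hSP := SP_of_irr (numsgp_Tset hv) (compl_Tset_ne hv) hirr hodd
  have hfrob := frob_Tset hv
  obtain ⟨v1, v2, v3, v4⟩ := hv
  unfold SymFam
  rcases le_or_gt y1 y2 with hc | hc
  · -- gap n = 3*y1 - 2, F = 3*y2 - 1
    have hn : (3 * y1 - 2) ∉ Tset y1 y2 := by rw [mem_Tset]; omega
    have := hSP _ hn
    rw [hfrob, mem_Tset] at this
    omega
  · -- gap n = 3*y2 - 1, F = 3*y1 - 2
    have hn : (3 * y2 - 1) ∉ Tset y1 y2 := by rw [mem_Tset]; omega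
    have := hSP _ hn
    rw [hfrob, mem_Tset] at this
    omega

lemma not_mirr_of {x1 x2 : ℕ} (hv : KValid x1 x2)
    (h : x1 + 1 ≤ 2 * x2 ∧ x2 + 2 ≤ 2 * x1) : ¬ nsMIrr 3 (Tset x1 x2) := by
  obtain ⟨v1, v2, v3, v4⟩ := hv
  intro hmi
  apply hmi
  have hvA : KValid x1 (x2 - 1) := ⟨by omega, by omega, by omega, by omega⟩
  have hvB : KValid (x1 - 1) x2 := ⟨by omega, by omega, by omega, by omega⟩
  refine ⟨Tset x1 (x2 - 1), Tset (x1 - 1) x2, numsgp_Tset hvA, numsgp_Tset hvB,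
    mult_Tset hvA, mult_Tset hvB, ?_, ?_, ?_⟩
  · rw [Set.ssubset_def]
    constructor
    · intro n hn; rw [mem_Tset] at hn ⊢; omega
    · intro hcon
      have : (3 * x2 - 1) ∈ Tset x1 (x2 - 1) := by rw [mem_Tset]; omega
      have := hcon this
      rw [mem_Tset] at this
      omega
  · rw [Set.ssubset_def]
    constructor
    · intro n hn; rw [mem_Tset] at hn ⊢; omega
    · intro hcon
      have : (3 * x1 - 2) ∈ Tset (x1 - 1) x2 := by rw [mem_Tset]; omega
      have := hcon this
      rw [mem_Tset] at this
      omega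
  · ext n
    simp only [Set.mem_inter_iff, mem_Tset]
    omega

lemma mirr_of {x1 x2 : ℕ} (hv : KValid x1 x2)
    (h : ¬(x1 + 1 ≤ 2 * x2 ∧ x2 + 2 ≤ 2 * x1)) : nsMIrr 3 (Tset x1 x2) := by
  obtain ⟨v1, v2, v3, v4⟩ := hv
  rintro ⟨T1, T2, hT1, hT2, hm1, hm2, hs1, hs2, heq⟩
  obtain ⟨a, b, ⟨w1, w2, w3, w4⟩, hT1eq⟩ := struct_mult3 hT1 hm1
  obtain ⟨c, d, ⟨u1, u2, u3, u4⟩, hT2eq⟩ := struct_mult3 hT2 hm2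
  rw [hT1eq] at hs1 heq
  rw [hT2eq] at hs2 heq
  have hmem1 : (3 * x1 + 1) ∈ Tset x1 x2 := by rw [mem_Tset]; omega
  have hmem2 : (3 * x2 + 2) ∈ Tset x1 x2 := by rw [mem_Tset]; omega
  have ha : 3 * x1 + 1 ∈ Tset a b := hs1.subset hmem1
  have hb : 3 * x2 + 2 ∈ Tset a b := hs1.subset hmem2
  have hc : 3 * x1 + 1 ∈ Tset c d := hs2.subset hmem1
  have hd : 3 * x2 + 2 ∈ Tset c d := hs2.subset hmem2
  rw [mem_Tset] at ha hb hc hd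
  have hgap1 : (3 * x1 - 2) ∉ Tset x1 x2 := by rw [mem_Tset]; omega
  have hgap2 : (3 * x2 - 1) ∉ Tset x1 x2 := by rw [mem_Tset]; omega
  rw [heq] at hgap1 hgap2
  have hg1 : (3 * x1 - 2) ∉ Tset a b ∨ (3 * x1 - 2) ∉ Tset c d := by
    by_contra hcon
    push_neg at hcon
    exact hgap1 ⟨hcon.1, hcon.2⟩
  have hg2 : (3 * x2 - 1) ∉ Tset a b ∨ (3 * x2 - 1) ∉ Tset c d := by
    by_contra hcon
    push_neg at hcon
    exact hgap2 ⟨hcon.1, hcon.2⟩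
  have hne1 : ¬(a = x1 ∧ b = x2) := by
    rintro ⟨rfl, rfl⟩
    exact absurd hs1 (lt_irrefl _)
  have hne2 : ¬(c = x1 ∧ d = x2) := by
    rintro ⟨rfl, rfl⟩
    exact absurd hs2 (lt_irrefl _)
  simp only [mem_Tset] at hg1 hg2
  omega

/-- S of multiplicity 3 is an intersection of symmetric
numerical semigroups with multiplicity 3 iff S is 3-symmetric, or S is not
3-irreducible with x1 odd and x2 even. -/
theorem stmt12 (S : Set ℕ) (x1 x2 : ℕ) (hS : IsNumSgp S) (hm : nsMult S = 3)
    (h1 : nsApery S 3 1 = 3 * x1 + 1) (h2 : nsApery S 3 2 = 3 * x2 + 2) :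
    (∃ F : Set (Set ℕ), F.Nonempty ∧ F.Finite ∧
        (∀ T ∈ F, IsNumSgp T ∧ nsMult T = 3 ∧ nsSym T) ∧ S = ⋂₀ F) ↔
      (nsMSym 3 S ∨ (¬ nsMIrr 3 S ∧ Odd x1 ∧ Even x2)) := by
  obtain ⟨y1, y2, hv0, hSeq⟩ := struct_mult3 hS hm
  rw [hSeq, apery1_Tset] at h1
  rw [hSeq, apery2_Tset] at h2
  have hy1 : x1 = y1 := by omega
  have hy2 : x2 = y2 := by omega
  subst hy1; subst hy2
  obtain ⟨v1, v2, v3, v4⟩ := hv0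
  have hOddF : Odd (nsFrob S) ↔ ((x2 < x1 ∧ x1 % 2 = 1) ∨ (x1 ≤ x2 ∧ x2 % 2 = 0)) := by
    rw [hSeq, frob_Tset ⟨v1, v2, v3, v4⟩, Nat.odd_iff]
    omega
  have hIrrIff : nsMIrr 3 S ↔ ¬(x1 + 1 ≤ 2 * x2 ∧ x2 + 2 ≤ 2 * x1) := by
    rw [hSeq]
    constructor
    · intro hmi
      by_contra hcon
      exact not_mirr_of ⟨v1, v2, v3, v4⟩ (by omega) hmi
    · exact mirr_of ⟨v1, v2, v3, v4⟩
  constructor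
  · rintro ⟨F, hFne, hFfin, hFall, hFeq⟩
    have hgap1 : (3 * x1 - 2) ∉ S := by rw [hSeq, mem_Tset]; omega
    have hgap2 : (3 * x2 - 1) ∉ S := by rw [hSeq, mem_Tset]; omega
    have hmem1 : (3 * x1 + 1) ∈ S := by rw [hSeq, mem_Tset]; omega
    have hmem2 : (3 * x2 + 2) ∈ S := by rw [hSeq, mem_Tset]; omega
    have key : ∀ g : ℕ, g ∉ S → ∃ a b : ℕ, KValid a b ∧ SymFam a b ∧
        3 * x1 + 1 ∈ Tset a b ∧ 3 * x2 + 2 ∈ Tset a b ∧ g ∉ Tset a b := by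
      intro g hg
      rw [hFeq] at hg
      simp only [Set.mem_sInter, not_forall] at hg
      obtain ⟨T, hTF, hTn⟩ := hg
      obtain ⟨hTsg, hTm, hTsym⟩ := hFall T hTF
      obtain ⟨a, b, hvT, hTeq⟩ := struct_mult3 hTsg hTm
      rw [hTeq] at hTn hTsym
      have hsub : S ⊆ T := by rw [hFeq]; exact Set.sInter_subset_of_mem hTF
      rw [hTeq] at hsub
      exact ⟨a, b, hvT, symfam_of_sym hvT hTsym, hsub hmem1, hsub hmem2, hTn⟩
    obtain ⟨a, b, ⟨w1, w2, w3, w4⟩, hfamA, hA1, hA2, hA3⟩ := key _ hgap1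
    obtain ⟨c, d, ⟨u1, u2, u3, u4⟩, hfamB, hB1, hB2, hB3⟩ := key _ hgap2
    rw [mem_Tset] at hA1 hA2 hA3 hB1 hB2 hB3
    have hC1 : x2 = 2 * x1 ∨ (x1 % 2 = 1 ∧ 3 ≤ x1) := by
      rcases hfamA with ⟨hf1, hf2⟩ | ⟨hf1, hf2⟩ <;> omega
    have hC2 : x1 = 2 * x2 + 1 ∨ (x2 % 2 = 0 ∧ 2 ≤ x2) := by
      rcases hfamB with ⟨hf1, hf2⟩ | ⟨hf1, hf2⟩ <;> omega
    unfold nsMSym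
    rw [hOddF, hIrrIff, Nat.odd_iff, Nat.even_iff]
    omega
  · intro hRHS
    unfold nsMSym at hRHS
    rw [hOddF, hIrrIff, Nat.odd_iff, Nat.even_iff] at hRHS
    have hC1 : x2 = 2 * x1 ∨ (x1 % 2 = 1 ∧ 3 ≤ x1) := by omega
    have hC2 : x1 = 2 * x2 + 1 ∨ (x2 % 2 = 0 ∧ 2 ≤ x2) := by omega
    have hTA : ∃ a2, a2 ≤ x2 ∧ SymFam x1 a2 := by
      rcases hC1 with h | h
      · exact ⟨x2, le_refl _, Or.inl ⟨h, v1⟩⟩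
      · exact ⟨(x1 - 1) / 2, by omega, Or.inr ⟨by omega, by omega⟩⟩
    have hTB : ∃ b1, b1 ≤ x1 ∧ SymFam b1 x2 := by
      rcases hC2 with h | h
      · exact ⟨x1, le_refl _, Or.inr ⟨h, v2⟩⟩
      · exact ⟨x2 / 2, by omega, Or.inl ⟨by omega, by omega⟩⟩
    obtain ⟨a2, ha2, hfamA⟩ := hTA
    obtain ⟨b1, hb1, hfamB⟩ := hTB
    obtain ⟨p1, p2, p3, p4⟩ := kvalid_of_symfam hfamA
    obtain ⟨q1, q2, q3, q4⟩ := kvalid_of_symfam hfamB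
    refine ⟨{Tset x1 a2, Tset b1 x2}, ⟨_, Set.mem_insert _ _⟩,
      (Set.finite_singleton _).insert _, ?_, ?_⟩
    · intro T hT
      simp only [Set.mem_insert_iff, Set.mem_singleton_iff] at hT
      rcases hT with rfl | rfl
      · exact ⟨numsgp_Tset ⟨p1, p2, p3, p4⟩, mult_Tset ⟨p1, p2, p3, p4⟩,
          sym_of_symfam hfamA⟩
      · exact ⟨numsgp_Tset ⟨q1, q2, q3, q4⟩, mult_Tset ⟨q1, q2, q3, q4⟩,
          sym_of_symfam hfamB⟩
    · rw [hSeq]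
      ext n
      simp only [Set.sInter_insert, Set.sInter_singleton, Set.mem_inter_iff, mem_Tset]
      omega
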